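/- Let W : (0,1] → [0,∞) be absolutely continuous and nondecreasing, H : (0,1] → (0,∞) absolutely continuous with (d/ds)(H(s)/s^{m+1}) = (2/s) W(s), and suppose there are constants γ, α > 0 such that W'(s)/W(s) ≥ α/s whenever W(s) ≤ γ s^{-(m+1)} H(s) and W(s) > 0. Assume W(r) ≤ ε r^{-(m+1)} H(r) for some r ∈ (0,1], where ε > 0 satisfies ε ≤ γ(1 - 2ε/α)/2 and 2ε < α. Then W(s) ≤ (s/r)^α W(r) for all 0 < s ≤ r. -/

import Mathlib

open Set Filter

/-- Abstract ODE lemma encoding the decay of the Weiss energy `W` below the epiperimetric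
threshold: if `W' ≥ (α/s) W` whenever `W(s) ≤ γ s^{-(m+1)} H(s)`, if
`(H(s)/s^{m+1})' = (2/s) W(s)`, and if `W(r) ≤ ε r^{-(m+1)} H(r)` with `ε` small, then
`W(s) ≤ (s/r)^α W(r)` for all `s ≤ r`. -/
theorem weiss_decay_ode (m : ℕ) (γ α ε : ℝ) (hγ : 0 < γ) (hα : 0 < α)
    (hε : 0 < ε) (hεγ : ε ≤ γ * (1 - 2 * ε / α) / 2) (hεα : 2 * ε < α)
    (W W' H : ℝ → ℝ)
    (hW0 : ∀ s ∈ Set.Ioc (0 : ℝ) 1, 0 ≤ W s)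
    (hWmono : MonotoneOn W (Set.Ioc (0 : ℝ) 1))
    (hWd : ∀ s ∈ Set.Ioc (0 : ℝ) 1, HasDerivAt W (W' s) s)
    (hH : ∀ s ∈ Set.Ioc (0 : ℝ) 1, 0 < H s)
    (hHd : ∀ s ∈ Set.Ioc (0 : ℝ) 1,
      HasDerivAt (fun t => H t / t ^ (m + 1)) (2 / s * W s) s)
    (hepi : ∀ s ∈ Set.Ioc (0 : ℝ) 1,
      W s ≤ γ * H s / s ^ (m + 1) → 0 < W s → α / s * W s ≤ W' s)
    (r : ℝ) (hr : r ∈ Set.Ioc (0 : ℝ) 1)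
    (hWr : W r ≤ ε * H r / r ^ (m + 1)) :
    ∀ s : ℝ, 0 < s → s ≤ r → W s ≤ (s / r) ^ α * W r := by
  obtain ⟨hr0, hr1⟩ := hr
  have hrI : r ∈ Ioc (0:ℝ) 1 := ⟨hr0, hr1⟩
  have hx1 : 2 * ε / α < 1 := (div_lt_one hα).2 hεα
  have hx0 : (0:ℝ) ≤ 2 * ε / α := by positivity
  have hεγ2 : ε ≤ γ / 2 := hεγ.trans (by nlinarith)
  have hhr : 0 < H r / r ^ (m+1) := div_pos (hH r hrI) (by positivity)
  have hWr' : W r ≤ ε * (H r / r ^ (m+1)) := by rw [← mul_div_assoc]; exact hWr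
  have hWr0 : 0 ≤ W r := hW0 r hrI
  -- the derivative of a monotone function is nonnegative
  have hW'0 : ∀ s ∈ Ioo (0:ℝ) 1, 0 ≤ W' s := by
    intro s hs
    have hd : HasDerivWithinAt W (W' s) (Ioi s) s :=
      (hWd s ⟨hs.1, hs.2.le⟩).hasDerivWithinAt
    have htend := hasDerivWithinAt_iff_tendsto_slope.1 hd
    rw [Set.diff_singleton_eq_self (by simp : s ∉ Ioi s)] at htend
    refine ge_of_tendsto htend ?_
    filter_upwards [Ioc_mem_nhdsGT_of_mem ⟨le_refl s, hs.2⟩] with t ht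
    have hts : s < t := ht.1
    have h1 : W s ≤ W t := hWmono ⟨hs.1, hs.2.le⟩ ⟨hs.1.trans hts, ht.2⟩ hts.le
    rw [slope_def_field]
    exact div_nonneg (by linarith) (by linarith)
  -- below the threshold, the differential inequality holds (even when `W = 0`)
  have hkey : ∀ t ∈ Ioo (0:ℝ) 1, W t ≤ γ * H t / t ^ (m+1) → α / t * W t ≤ W' t := by
    intro t ht hthr
    rcases (hW0 t ⟨ht.1, ht.2.le⟩).lt_or_eq with hpos | hzero
    · exact hepi t ⟨ht.1, ht.2.le⟩ hthr hpos
    · rw [← hzero, mul_zero]; exact hW'0 t ht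
  -- Key lemma 1: decay on intervals where the threshold holds
  have decay : ∀ a, 0 < a → a ≤ r →
      (∀ t ∈ Icc a r, W t ≤ γ * H t / t ^ (m+1)) →
      ∀ s ∈ Icc a r, W s ≤ (s / r) ^ α * W r := by
    intro a ha0 har hthr s hs
    have hs0 : 0 < s := lt_of_lt_of_le ha0 hs.1
    have hmem : ∀ t ∈ Icc a r, t ∈ Ioc (0:ℝ) 1 :=
      fun t ht => ⟨lt_of_lt_of_le ha0 ht.1, ht.2.trans hr1⟩
    have hgd : ∀ t ∈ Icc a r, HasDerivAt (fun x => W x / x ^ α)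
        ((W' t * t ^ α - W t * (α * t ^ (α - 1))) / (t ^ α) ^ 2) t := by
      intro t ht
      have ht0 : 0 < t := lt_of_lt_of_le ha0 ht.1
      have hp : HasDerivAt (fun x : ℝ => x ^ α) (α * t ^ (α - 1)) t :=
        Real.hasDerivAt_rpow_const (Or.inl ht0.ne')
      exact (hWd t (hmem t ht)).div hp (Real.rpow_pos_of_pos ht0 α).ne'
    have hmono : MonotoneOn (fun x => W x / x ^ α) (Icc a r) := by
      apply monotoneOn_of_deriv_nonneg (convex_Icc a r)
      · exact fun t ht => (hgd t ht).continuousAt.continuousWithinAt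
      · rw [interior_Icc]
        exact fun t ht => ((hgd t (Ioo_subset_Icc_self ht)).differentiableAt).differentiableWithinAt
      · rw [interior_Icc]
        intro t ht
        rw [(hgd t (Ioo_subset_Icc_self ht)).deriv]
        have ht0 : 0 < t := ha0.trans ht.1
        have htα : (0:ℝ) < t ^ α := Real.rpow_pos_of_pos ht0 α
        have hd1 : α / t * W t ≤ W' t :=
          hkey t ⟨ht0, ht.2.trans_le hr1⟩ (hthr t (Ioo_subset_Icc_self ht))
        have he : W t * (α * t ^ (α - 1)) = (α / t * W t) * t ^ α := by
          rw [Real.rpow_sub ht0, Real.rpow_one]; ring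
        rw [he]
        have := mul_le_mul_of_nonneg_right hd1 htα.le
        exact div_nonneg (by linarith) (sq_nonneg _)
    have hg := hmono hs (right_mem_Icc.2 har) hs.2
    have hsα : (0:ℝ) < s ^ α := Real.rpow_pos_of_pos hs0 α
    have hrα : (0:ℝ) < r ^ α := Real.rpow_pos_of_pos hr0 α
    rw [div_le_div_iff₀ hsα hrα] at hg
    rw [Real.div_rpow hs0.le hr0.le, div_mul_eq_mul_div, le_div_iff₀ hrα]
    nlinarith
  -- Key lemma 2: lower bound on `H a / a^(m+1)`
  have hbound : ∀ a, 0 < a → a ≤ r →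
      (∀ t ∈ Icc a r, W t ≤ γ * H t / t ^ (m+1)) →
      H r / r ^ (m+1) - 2 / α * W r ≤ H a / a ^ (m+1) := by
    intro a ha0 har hthr
    have hdec := decay a ha0 har hthr
    have hφd : ∀ t ∈ Icc a r,
        HasDerivAt (fun x => H x / x ^ (m+1) - 2 / α * ((x / r) ^ α * W r))
          (2 / t * W t - 2 / α * (α / t * (t / r) ^ α * W r)) t := by
      intro t ht
      have ht0 : 0 < t := lt_of_lt_of_le ha0 ht.1
      have htI : t ∈ Ioc (0:ℝ) 1 := ⟨ht0, ht.2.trans hr1⟩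
      have htr0 : 0 < t / r := div_pos ht0 hr0
      have hin : HasDerivAt (fun x : ℝ => x / r) (1 / r) t := by
        simpa using (hasDerivAt_id t).div_const r
      have hout : HasDerivAt (fun x : ℝ => x ^ α) (α * (t / r) ^ (α - 1)) (t / r) :=
        Real.hasDerivAt_rpow_const (Or.inl htr0.ne')
      have h1 : HasDerivAt (fun x : ℝ => (x / r) ^ α) (α / t * (t / r) ^ α) t := by
        have := hout.comp t hin
        refine this.congr_deriv ?_
        symm
        rw [Real.rpow_sub htr0, Real.rpow_one]
        field_simp
      exact (hHd t htI).sub ((h1.mul_const (W r)).const_mul (2 / α))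
    have hanti : AntitoneOn (fun x => H x / x ^ (m+1) - 2 / α * ((x / r) ^ α * W r))
        (Icc a r) := by
      apply antitoneOn_of_deriv_nonpos (convex_Icc a r)
      · exact fun t ht => (hφd t ht).continuousAt.continuousWithinAt
      · rw [interior_Icc]
        exact fun t ht => ((hφd t (Ioo_subset_Icc_self ht)).differentiableAt).differentiableWithinAt
      · rw [interior_Icc]
        intro t ht
        rw [(hφd t (Ioo_subset_Icc_self ht)).deriv]
        have ht0 : 0 < t := ha0.trans ht.1
        have hWt := hdec t (Ioo_subset_Icc_self ht)
        have he : 2 / α * (α / t * (t / r) ^ α * W r) = 2 / t * ((t / r) ^ α * W r) := by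
          field_simp
        rw [he]
        have h2t : (0:ℝ) ≤ 2 / t := by positivity
        have := mul_le_mul_of_nonneg_left hWt h2t
        linarith
    have h1 := hanti (left_mem_Icc.2 har) (right_mem_Icc.2 har) har
    have hrr : (r / r) ^ α = (1:ℝ) := by rw [div_self hr0.ne', Real.one_rpow]
    simp only [hrr, one_mul] at h1
    have haρ : 0 ≤ (a / r) ^ α * W r :=
      mul_nonneg (Real.rpow_nonneg (by positivity) α) hWr0
    have h2α : (0:ℝ) ≤ 2 / α := by positivity
    nlinarith
  -- improvement: the threshold self-improves to `γ/2`
  have improve : ∀ a, 0 < a → a ≤ r →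
      (∀ t ∈ Icc a r, W t ≤ γ * H t / t ^ (m+1)) →
      ∀ t ∈ Icc a r, W t ≤ γ / 2 * (H t / t ^ (m+1)) := by
    intro a ha0 har hthr t ht
    have ht0 : 0 < t := lt_of_lt_of_le ha0 ht.1
    have hb := hbound t ht0 ht.2 (fun u hu => hthr u ⟨ht.1.trans hu.1, hu.2⟩)
    have hWt : W t ≤ W r := hWmono ⟨ht0, ht.2.trans hr1⟩ hrI ht.2
    have h3 : H r / r ^ (m+1) - 2 / α * (ε * (H r / r ^ (m+1))) ≤ H t / t ^ (m+1) := by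
      have := mul_le_mul_of_nonneg_left hWr' (by positivity : (0:ℝ) ≤ 2 / α)
      linarith
    have h4 : (1 - 2 * ε / α) * (H r / r ^ (m+1))
        = H r / r ^ (m+1) - 2 / α * (ε * (H r / r ^ (m+1))) := by ring
    calc W t ≤ W r := hWt
      _ ≤ ε * (H r / r ^ (m+1)) := hWr'
      _ ≤ γ * (1 - 2 * ε / α) / 2 * (H r / r ^ (m+1)) :=
          mul_le_mul_of_nonneg_right hεγ hhr.le
      _ = γ / 2 * ((1 - 2 * ε / α) * (H r / r ^ (m+1))) := by ring
      _ = γ / 2 * (H r / r ^ (m+1) - 2 / α * (ε * (H r / r ^ (m+1)))) := by rw [h4]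
      _ ≤ γ / 2 * (H t / t ^ (m+1)) := mul_le_mul_of_nonneg_left h3 (by positivity)
  -- the good set
  set A : Set ℝ := {a | 0 < a ∧ a ≤ r ∧ ∀ t ∈ Icc a r, W t ≤ γ * H t / t ^ (m+1)} with hA
  have hrA : r ∈ A := by
    refine ⟨hr0, le_refl r, fun t ht => ?_⟩
    have hteq : t = r := le_antisymm ht.2 ht.1
    subst hteq
    rw [mul_div_assoc]
    calc W t ≤ ε * (H t / t ^ (m+1)) := hWr'
      _ ≤ γ * (H t / t ^ (m+1)) := mul_le_mul_of_nonneg_right (by linarith) hhr.le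
  have hbdd : BddBelow A := ⟨0, fun x hx => hx.1.le⟩
  have hne : A.Nonempty := ⟨r, hrA⟩
  have hcr : sInf A ≤ r := csInf_le hbdd hrA
  have hc00 : 0 ≤ sInf A := le_csInf hne fun x hx => hx.1.le
  have hstep1 : ∀ t, sInf A < t → t ≤ r → t ∈ A := by
    intro t hct htr
    obtain ⟨a, haA, hat⟩ := exists_lt_of_csInf_lt hne hct
    exact ⟨lt_of_lt_of_le haA.1 hat.le, htr,
      fun u hu => haA.2.2 u ⟨hat.le.trans hu.1, hu.2⟩⟩
  have himp : ∀ t, sInf A < t → t ≤ r → W t ≤ γ / 2 * (H t / t ^ (m+1)) := by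
    intro t hct htr
    have ht := hstep1 t hct htr
    exact improve t ht.1 htr ht.2.2 t ⟨le_refl t, htr⟩
  have hczero : sInf A = 0 := by
    by_contra hc0'
    have hc0 : 0 < sInf A := lt_of_le_of_ne hc00 (Ne.symm hc0')
    set c := sInf A with hc
    have hcI : c ∈ Ioc (0:ℝ) 1 := ⟨hc0, hcr.trans hr1⟩
    have hhc : 0 < H c / c ^ (m+1) := div_pos (hH c hcI) (by positivity)
    have hWc : W c ≤ γ / 2 * (H c / c ^ (m+1)) := by
      rcases eq_or_lt_of_le hcr with hceq | hclt
      · rw [hceq]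
        calc W r ≤ ε * (H r / r ^ (m+1)) := hWr'
          _ ≤ γ / 2 * (H r / r ^ (m+1)) := mul_le_mul_of_nonneg_right hεγ2 hhr.le
      · have hcont : ContinuousAt (fun t => γ / 2 * (H t / t ^ (m+1)) - W t) c :=
          (continuousAt_const.mul (hHd c hcI).continuousAt).sub (hWd c hcI).continuousAt
        have hnn : 0 ≤ γ / 2 * (H c / c ^ (m+1)) - W c := by
          have htd : Filter.Tendsto (fun t => γ / 2 * (H t / t ^ (m+1)) - W t) (nhdsWithin c (Ioi c))
            (nhds (γ / 2 * (H c / c ^ (m+1)) - W c)) := hcont.continuousWithinAt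
          refine ge_of_tendsto htd ?_
          filter_upwards [Ioc_mem_nhdsGT_of_mem ⟨le_refl c, hclt⟩] with t ht
          have := himp t ht.1 ht.2
          linarith
        linarith
    have hfc : 0 < γ * (H c / c ^ (m+1)) - W c := by nlinarith
    have hcont : ContinuousAt (fun t => γ * (H t / t ^ (m+1)) - W t) c :=
      (continuousAt_const.mul (hHd c hcI).continuousAt).sub (hWd c hcI).continuousAt
    obtain ⟨δ, hδ0, hball⟩ := Metric.mem_nhds_iff.1 (hcont (Ioi_mem_nhds hfc))
    set a := max (c/2) (c - δ/2) with ha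
    have ha0 : 0 < a := lt_max_of_lt_left (by linarith)
    have hac : a < c := max_lt (by linarith) (by linarith)
    have haA : a ∈ A := by
      refine ⟨ha0, hac.le.trans hcr, fun t ht => ?_⟩
      have ht0 : 0 < t := lt_of_lt_of_le ha0 ht.1
      rcases le_or_gt c t with hct | htc
      · rcases eq_or_lt_of_le hct with rfl | h
        · rw [mul_div_assoc]; linarith
        · have h1 := himp t h ht.2
          have h2 : 0 < H t / t ^ (m+1) := div_pos (hH t ⟨ht0, ht.2.trans hr1⟩) (by positivity)
          rw [mul_div_assoc]; nlinarith
      · have hdist : dist t c < δ := by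
          rw [Real.dist_eq, abs_of_nonpos (by linarith : t - c ≤ 0), neg_sub]
          have h5 : c - δ/2 ≤ a := le_max_right _ _
          have h6 : a ≤ t := ht.1
          linarith
        have h7 : (0:ℝ) < γ * (H t / t ^ (m+1)) - W t := hball hdist
        rw [mul_div_assoc]; linarith
    have := csInf_le hbdd haA
    linarith
  intro s hs0 hsr
  have hsA : s ∈ A := hstep1 s (by rw [hczero]; exact hs0) hsr
  exact decay s hs0 hsr hsA.2.2 s ⟨le_refl s, hsr⟩
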